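/- The ploidy profile (3) on a single-element set {x_1} is a weak orchard but not an orchard: there exists a phylogenetic network on {x_1} realizing (3) that admits a complete weak cherry modification sequence, but no phylogenetic network on {x_1} realizing (3) admits a complete cherry modification sequence. -/

import Mathlib

/-!
Formalization preamble for "Autopolyploidy, allopolyploidy, and phylogenetic
networks with horizontal arcs" (Huber & Maher).

Networks are finite directed multigraphs whose vertices and arcs are (finitely
many) natural numbers; parallel arcs (beads) are allowed, loops are not.
-/

namespace Ploidy

/-- A finite directed multigraph: both vertex names and arc identifiers are
natural numbers; `src`/`tgt` give the endpoints of each arc. -/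
structure Net where
  verts : Finset ℕ
  arcs : Finset ℕ
  src : ℕ → ℕ
  tgt : ℕ → ℕ

/-- The indegree of a vertex. -/
def inDeg (G : Net) (v : ℕ) : ℕ := (G.arcs.filter fun a => G.tgt a = v).card

/-- The outdegree of a vertex. -/
def outDeg (G : Net) (v : ℕ) : ℕ := (G.arcs.filter fun a => G.src a = v).card

def IsLeafN (G : Net) (v : ℕ) : Prop := v ∈ G.verts ∧ inDeg G v = 1 ∧ outDeg G v = 0
def IsTreeVert (G : Net) (v : ℕ) : Prop := v ∈ G.verts ∧ inDeg G v = 1 ∧ outDeg G v = 2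
def IsReticN (G : Net) (v : ℕ) : Prop := v ∈ G.verts ∧ inDeg G v = 2 ∧ outDeg G v = 1
def IsRootN (G : Net) (v : ℕ) : Prop := v ∈ G.verts ∧ inDeg G v = 0

instance (G : Net) (v : ℕ) : Decidable (IsLeafN G v) :=
  decidable_of_iff (v ∈ G.verts ∧ inDeg G v = 1 ∧ outDeg G v = 0) Iff.rfl

/-- `IsWalk G l u v`: the list of arcs `l` forms a directed walk from `u` to `v`. -/
def IsWalk (G : Net) : List ℕ → ℕ → ℕ → Prop
  | [], u, v => u = v ∧ u ∈ G.verts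
  | a :: l, u, v => a ∈ G.arcs ∧ G.src a = u ∧ IsWalk G l (G.tgt a) v

/-- The number of directed paths from `u` to `v` (in a DAG every directed walk is
a path, and there are finitely many of them). -/
noncomputable def nPaths (G : Net) (u v : ℕ) : ℕ := Set.ncard {l : List ℕ | IsWalk G l u v}

/-- `a` is an arc from `u` to `v`. -/
def ArcFT (G : Net) (a u v : ℕ) : Prop := a ∈ G.arcs ∧ G.src a = u ∧ G.tgt a = v

/-- `u` is a parent of `v`. -/
def IsParent (G : Net) (u v : ℕ) : Prop := ∃ a, ArcFT G a u v

/-- `w` is below `u` (reachable from `u` by a directed walk, possibly `u = w`). -/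
def BelowV (G : Net) (u w : ℕ) : Prop := ∃ l, IsWalk G l u w

/-- `v` is an end vertex of a pair of parallel arcs (a bead). -/
def InBead (G : Net) (v : ℕ) : Prop :=
  ∃ a b, a ∈ G.arcs ∧ b ∈ G.arcs ∧ a ≠ b ∧ G.src a = G.src b ∧ G.tgt a = G.tgt b ∧
    (G.src a = v ∨ G.tgt a = v)

/-- `G` is beadless: there is no pair of parallel arcs. -/
def Beadless (G : Net) : Prop := ∀ v, ¬ InBead G v

/-- `G` is a (rooted, binary) phylogenetic network in the sense of Huber–Maher:
a rooted DAG, possibly with beads but without loops, with a unique root of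
indegree 0 and outdegree 2, all of whose other vertices are leaves, tree
vertices or reticulation vertices. -/
structure IsPhylo (G : Net) : Prop where
  src_mem : ∀ a ∈ G.arcs, G.src a ∈ G.verts
  tgt_mem : ∀ a ∈ G.arcs, G.tgt a ∈ G.verts
  no_loop : ∀ a ∈ G.arcs, G.src a ≠ G.tgt a
  acyclic : ∀ (v : ℕ) (l : List ℕ), l ≠ [] → ¬ IsWalk G l v v
  root_exu : ∃! r, IsRootN G r
  root_out : ∀ r, IsRootN G r → outDeg G r = 2
  types : ∀ v ∈ G.verts, IsRootN G v ∨ IsLeafN G v ∨ IsTreeVert G v ∨ IsReticN G v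

/-- An HGT-consistent labelling: (P1), (P2) and (P3) (the latter required only for
reticulation vertices not contained in beads). -/
def IsHGT (G : Net) (t : ℕ → ℝ) : Prop :=
  (∀ v ∈ G.verts, 0 ≤ t v) ∧
  (∀ a ∈ G.arcs,
      (IsReticN G (G.tgt a) → t (G.src a) ≤ t (G.tgt a)) ∧
      (¬ IsReticN G (G.tgt a) → t (G.src a) < t (G.tgt a))) ∧
  (∀ u ∈ G.verts, ¬ IsLeafN G u → ∃ v, IsParent G u v ∧ t u < t v) ∧
  (∀ v, IsReticN G v → ¬ InBead G v → ∃! u, IsParent G u v ∧ t u = t v)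

/-- `v` is a reticulation vertex (not contained in a bead) violating (P3). -/
def ViolatesP3 (G : Net) (t : ℕ → ℝ) (v : ℕ) : Prop :=
  IsReticN G v ∧ ¬ InBead G v ∧ ¬ (∃! u, IsParent G u v ∧ t u = t v)

/-- A weak HGT-consistent labelling: (P1), (P2) and (P3'): at most one reticulation
vertex `v`, with distinct parents `u₁, u₂` such that `u₂` is below `u₁` and
`t u₁ ≠ t v ≠ t u₂`, violates (P3). -/
def IsWeakHGT (G : Net) (t : ℕ → ℝ) : Prop :=
  (∀ v ∈ G.verts, 0 ≤ t v) ∧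
  (∀ a ∈ G.arcs,
      (IsReticN G (G.tgt a) → t (G.src a) ≤ t (G.tgt a)) ∧
      (¬ IsReticN G (G.tgt a) → t (G.src a) < t (G.tgt a))) ∧
  (∀ u ∈ G.verts, ¬ IsLeafN G u → ∃ v, IsParent G u v ∧ t u < t v) ∧
  (∀ v w, ViolatesP3 G t v → ViolatesP3 G t w → v = w) ∧
  (∀ v, ViolatesP3 G t v →
      ∃ u1 u2, u1 ≠ u2 ∧ IsParent G u1 v ∧ IsParent G u2 v ∧ BelowV G u1 u2 ∧
        t u1 ≠ t v ∧ t u2 ≠ t v)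

/-! ### Ploidy profiles and the simplification sequence -/

/-- A ploidy profile: a nonempty descending list of positive integers; the entry at
(0-based) position `i` is indexed by the taxon `x_{i+1}`. -/
def IsProfileL (l : List ℕ) : Prop := l ≠ [] ∧ l.Pairwise (· ≥ ·) ∧ ∀ x ∈ l, 1 ≤ x

/-- A simple ploidy profile: first component at least 2, all other components 1. -/
def IsSimpleP (l : List ℕ) : Prop := l ≠ [] ∧ 2 ≤ l.headI ∧ ∀ x ∈ l.tail, x = 1

/-- A strictly simple ploidy profile. -/
def IsStrictlySimpleP (l : List ℕ) : Prop := IsSimpleP l ∧ l.length = 1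

/-- Insert `x` into a descending list, directly after the last occurrence of the
value `x` (i.e. after all entries `≥ x`). -/
def insertDesc (x : ℕ) : List ℕ → List ℕ
  | [] => [x]
  | y :: ys => if x ≤ y then y :: insertDesc x ys else x :: y :: ys

/-- One step of the simplification process for ploidy profiles; simple profiles are
fixed points.  With `α = m₁ - m₂`: if `α = 0` delete `m₁`; if `α > m₂` replace `m₁`
by `α`; if `0 < α ≤ m₂` delete `m₁` and insert `α` directly after the last
occurrence of the value `α`. -/
def simpStep (l : List ℕ) : List ℕ :=
  if 2 ≤ l.headI ∧ ∀ x ∈ l.tail, x = 1 then l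
  else
    match l with
    | m1 :: m2 :: rest =>
        if m1 = m2 then m2 :: rest
        else if m2 < m1 - m2 then (m1 - m2) :: m2 :: rest
        else insertDesc (m1 - m2) (m2 :: rest)
    | _ => l

/-- `mt` is the (simple) terminal element of the simplification sequence of `m`. -/
def IsTerminal (m mt : List ℕ) : Prop := IsSimpleP mt ∧ ∃ k, simpStep^[k] m = mt

/-- A practical ploidy profile: simple but not strictly simple, or `(2^l)`, `l ≥ 1`. -/
def Practical (l : List ℕ) : Prop :=
  (IsSimpleP l ∧ 2 ≤ l.length) ∨ (l.length = 1 ∧ ∃ j, 1 ≤ j ∧ l.headI = 2 ^ j)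

/-- An arc-rich (strictly simple) ploidy profile: the binary representation of its
single component has dimension at least two. -/
def ArcRich (l : List ℕ) : Prop :=
  l.length = 1 ∧ 2 ≤ l.headI ∧ 2 ≤ (Nat.bits l.headI).count true

/-! ### Realizations of ploidy profiles -/

/-- A network together with an indexing of its leaves by the positions of a
ploidy profile. -/
structure LNet where
  net : Net
  leaf : ℕ → ℕ

/-- `R` is a phylogenetic network realizing the ploidy profile `m`: the leaves of
`R.net` are bijectively indexed by the positions of `m` and, for every `i`, the
number of directed paths from the root to the leaf `R.leaf i` is the `i`-th
component of `m`. -/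
def RealizesL (R : LNet) (m : List ℕ) : Prop :=
  IsPhylo R.net ∧
  (∀ i < m.length, IsLeafN R.net (R.leaf i)) ∧
  (∀ i j, i < m.length → j < m.length → R.leaf i = R.leaf j → i = j) ∧
  (∀ v, IsLeafN R.net v → ∃ i < m.length, R.leaf i = v) ∧
  (∀ i < m.length, ∀ r, IsRootN R.net r → nPaths R.net r (R.leaf i) = m.getD i 0)

/-! ### Concrete constructions: bead chains and the core network `B(m)` -/

/-- Build a network from a list of arcs (as (source, target) pairs); arc
identifiers are positions in the list, so repeated pairs yield beads. -/
def mkNet (l : List (ℕ × ℕ)) : Net where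
  verts := (l.map Prod.fst ++ l.map Prod.snd).toFinset
  arcs := Finset.range l.length
  src := fun i => (l.getD i (0, 0)).1
  tgt := fun i => (l.getD i (0, 0)).2

/-- The chain `B(l)` of `l` beads with a pendant leaf: vertex `2*j` is the tree
vertex of the `(j+1)`-st bead, `2*j+1` its reticulation vertex `h_{j+1}`, there is
an arc from `h_j` to the tree vertex of the next bead, and `2*l` is the pendant
leaf `x₁` attached by the arc `(h_l, x₁)`. -/
def beadChain (l : ℕ) : Net :=
  mkNet ((List.range l).flatMap fun j => [(2*j, 2*j+1), (2*j, 2*j+1), (2*j+1, 2*j+2)])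

/-- The decreasing list `(i₁, …, i_k)` of exponents of the binary representation
of `m₁`. -/
def expList (m1 : ℕ) : List ℕ :=
  ((List.range (m1+1)).filter fun j => m1.testBit j).reverse

/-- First vertex code available for the leaves `x_2, …, x_n` in `BNet`. -/
def xBase (m1 : ℕ) : ℕ := 2 * (expList m1).headI + 2 * (expList m1).length + 10

/-- The arcs of the core network `B(m)` for the simple profile `(m₁, 1, …, 1)` on
`n` taxa: a chain of `i₁` beads with pendant leaf `x₁ = 0` (root is the vertex
`2`), one root arc subdivided by `s_k` and, for `2 ≤ j ≤ k`, an arc `(s_j, s_j')`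
where `s_j'` subdivides the outgoing arc of the reticulation vertex having exactly
`i_j` reticulation vertices strictly below it and `s_2, …, s_{k-1}` subdivide the
arc `(s_k, s_k')`; if `n ≥ 2` a caterpillar tree on the leaves `x_2, …, x_n`
(codes `xBase m₁ + i`) is attached via a subdivision vertex `w` (placed on a root
arc if `k = 1`, on `(s_k, s_k')` if `k = 2`, and on `(s_{k-1}, s_k')` if `k ≥ 3`). -/
def BArcs (m1 n : ℕ) : List (ℕ × ℕ) :=
  let E := expList m1
  let k := E.length
  let i1 := E.headI
  let hv : ℕ → ℕ := fun j => 2*j + 1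
  let tv : ℕ → ℕ := fun j => 2*j
  let nxt : ℕ → ℕ := fun j => if j = i1 then 0 else 2*j + 2
  let S' : ℕ → ℕ := fun j => 2*i1 + 2 + j
  let P : ℕ → ℕ := fun j => 2*i1 + k + 2 + j
  let w : ℕ := 2*i1 + 2*k + 4
  let L : ℕ := 2*i1 + 2*k + 10
  let x : ℕ → ℕ := fun i => L + i
  let cv : ℕ → ℕ := fun i => L + n + i
  let r : ℕ → ℕ := fun t => i1 - E.getD (t-1) 0
  let rootArcs : List (ℕ × ℕ) :=
    if 2 ≤ k then [(tv 1, hv 1), (tv 1, P k), (P k, hv 1)]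
    else if 2 ≤ n then [(tv 1, hv 1), (tv 1, w), (w, hv 1)]
    else [(tv 1, hv 1), (tv 1, hv 1)]
  let otherBeads : List (ℕ × ℕ) :=
    (List.range' 2 (i1 - 1)).flatMap fun j => [(tv j, hv j), (tv j, hv j)]
  let chainArcs : List (ℕ × ℕ) :=
    (List.range' 1 i1).flatMap fun j =>
      match (List.range' 2 (k-1)).find? (fun t => r t == j) with
      | some t => [(hv j, S' t), (S' t, nxt j)]
      | none => [(hv j, nxt j)]
  let sChain : List ℕ :=
    [P k] ++ (List.range' 2 (k-2)).map P ++ (if 2 ≤ n then [w] else []) ++ [S' k]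
  let sArcs : List (ℕ × ℕ) :=
    if 2 ≤ k then (sChain.zip sChain.tail) ++ (List.range' 2 (k-2)).map (fun j => (P j, S' j))
    else []
  let catArcs : List (ℕ × ℕ) :=
    if n ≤ 1 then []
    else if n = 2 then [(w, x 2)]
    else [(w, cv 2)] ++
      ((List.range' 2 (n-3)).flatMap fun i => [(cv i, x i), (cv i, cv (i+1))]) ++
      [(cv (n-1), x (n-1)), (cv (n-1), x n)]
  rootArcs ++ otherBeads ++ chainArcs ++ sArcs ++ catArcs

/-- The core network `B(m)` for a simple profile with first component `m1` on `n`
taxa. -/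
def BNet (m1 n : ℕ) : Net := mkNet (BArcs m1 n)

/-- The core network `B(m)` of a ploidy profile whose terminal element is `mt`,
together with its leaf indexing (leaf `0` is `x₁ = 0`, leaf `i` is `x_{i+1}`). -/
def BLNet (mt : List ℕ) : LNet where
  net := BNet mt.headI mt.length
  leaf := fun i => if i = 0 then 0 else xBase mt.headI + (i + 1)

/-- The naive realization of the simple profile `(m₁, 1, …, 1)` on `n` taxa: a
directed path `0, 1, …, n + 2m₁ - 3` (with `v_j = j - 1`, `w_i = m₁ + i - 3`,
`v_j' = n + 2m₁ - 3 - j` and `x₁ = n + 2m₁ - 3`) together with the arcs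
`(v_j, v_j')` and the pendant leaf arcs `(w_i, x_i)` with `x_i = n + 2m₁ + i`. -/
def naiveNet (m1 n : ℕ) : Net :=
  mkNet (((List.range (n + 2*m1 - 3)).map fun p => (p, p+1)) ++
    ((List.range' 1 (m1 - 1)).map fun j => (j - 1, n + 2*m1 - 3 - j)) ++
    ((List.range' 2 (n - 1)).map fun i => (m1 + i - 3, n + 2*m1 + i)))

/-! ### Cherry modification operations -/

/-- `reduce(a,b)`: delete the leaf `b` of the cherry `{a,b}` together with its
incoming arc and suppress the resulting degree-two vertex (collapsing the network
to the single vertex `a` when the common parent is the root). -/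
def ReduceOp (G G' : Net) : Prop :=
  ∃ a b p ea eb, a ≠ b ∧ IsLeafN G a ∧ IsLeafN G b ∧
    ArcFT G ea p a ∧ ArcFT G eb p b ∧ ea ≠ eb ∧
    G'.verts = (G.verts.erase b).erase p ∧
    G'.arcs = (G.arcs.erase eb).erase ea ∧
    ((IsRootN G p ∧ ∀ e ∈ G'.arcs, G'.src e = G.src e ∧ G'.tgt e = G.tgt e) ∨
     (∃ ep q, ArcFT G ep q p ∧
        (∀ e ∈ G'.arcs, e ≠ ep → G'.src e = G.src e ∧ G'.tgt e = G.tgt e) ∧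
        G'.src ep = q ∧ G'.tgt ep = a))

/-- `cut(a,b)`: delete the reticulation arc of the reticulate cherry `{a,b}` with
reticulation leaf `b`, suppressing the two resulting degree-two vertices. -/
def CutOp (G G' : Net) : Prop :=
  ∃ a b pa pb e1 e2 e3 e4 e5 q r,
    a ≠ b ∧ IsLeafN G a ∧ IsLeafN G b ∧ IsReticN G pb ∧
    ArcFT G e1 pa a ∧ ArcFT G e2 pb b ∧ ArcFT G e3 pa pb ∧
    ArcFT G e4 q pb ∧ e3 ≠ e4 ∧ ArcFT G e5 r pa ∧
    G'.verts = (G.verts.erase pa).erase pb ∧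
    G'.arcs = ((G.arcs.erase e3).erase e1).erase e2 ∧
    (∀ e ∈ G'.arcs, e ≠ e4 → e ≠ e5 → G'.src e = G.src e ∧ G'.tgt e = G.tgt e) ∧
    G'.src e5 = r ∧ G'.tgt e5 = a ∧
    G'.src e4 = q ∧ G'.tgt e4 = b

/-- `simp(a)`: for a type-1 degenerate cherry `{a}` (sole leaf whose parent is the
reticulation vertex of a bead), delete one arc of the bead, suppressing the
resulting degree-two vertex and collapsing the outgoing arc of the tree vertex of
the bead. -/
def SimpOp (G G' : Net) : Prop :=
  ∃ a h u e1 e2 e3,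
    IsLeafN G a ∧ (∀ w, IsLeafN G w → w = a) ∧ IsReticN G h ∧
    ArcFT G e1 u h ∧ ArcFT G e2 u h ∧ e1 ≠ e2 ∧ ArcFT G e3 h a ∧
    ((IsRootN G u ∧ G'.verts = {a} ∧ G'.arcs = ∅) ∨
     (∃ eu q, ArcFT G eu q u ∧
        G'.verts = (G.verts.erase h).erase u ∧
        G'.arcs = ((G.arcs.erase e2).erase e3).erase e1 ∧
        (∀ e ∈ G'.arcs, e ≠ eu → G'.src e = G.src e ∧ G'.tgt e = G.tgt e) ∧
        G'.src eu = q ∧ G'.tgt eu = a))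

/-- `trim(a)`: for a type-2 degenerate cherry `{a}` (sole leaf whose parent `p` is
a reticulation vertex with distinct parents `q₁, q₂`), delete the arc `(q₁,p)`
(case (a): there is a vertex `q` with arcs `(q,q₁)`, `(q,q₂)`, `(q₁,q₂)`),
respectively one of the two parallel arcs from `q` to `q₂` (case (b): there is an
arc `(q₁,q)` and a pair of parallel arcs from `q` to `q₂`), suppressing the two
resulting degree-two vertices. -/
def TrimOp (G G' : Net) : Prop :=
  ∃ a p g0, IsLeafN G a ∧ (∀ w, IsLeafN G w → w = a) ∧ IsReticN G p ∧ ArcFT G g0 p a ∧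
   ((∃ q q1 q2 f1 f2 f3 g1 g2,
      ArcFT G g1 q1 p ∧ ArcFT G g2 q2 p ∧ g1 ≠ g2 ∧ q1 ≠ q2 ∧
      ArcFT G f1 q q1 ∧ ArcFT G f2 q q2 ∧ ArcFT G f3 q1 q2 ∧
      G'.verts = (G.verts.erase q1).erase p ∧
      G'.arcs = ((G.arcs.erase g1).erase f3).erase g0 ∧
      (∀ e ∈ G'.arcs, e ≠ f1 → e ≠ g2 → G'.src e = G.src e ∧ G'.tgt e = G.tgt e) ∧
      G'.src f1 = q ∧ G'.tgt f1 = q2 ∧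
      G'.src g2 = q2 ∧ G'.tgt g2 = a) ∨
    (∃ q q1 q2 eq' f1 f2 g1 g2,
      ArcFT G g1 q1 p ∧ ArcFT G g2 q2 p ∧ g1 ≠ g2 ∧ q1 ≠ q2 ∧
      ArcFT G eq' q1 q ∧ ArcFT G f1 q q2 ∧ ArcFT G f2 q q2 ∧ f1 ≠ f2 ∧
      G'.verts = (G.verts.erase q).erase q2 ∧
      G'.arcs = ((G.arcs.erase f2).erase f1).erase g2 ∧
      (∀ e ∈ G'.arcs, e ≠ eq' → G'.src e = G.src e ∧ G'.tgt e = G.tgt e) ∧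
      G'.src eq' = q1 ∧ G'.tgt eq' = p))

/-- A single cherry modification operation: reduce, cut or simp. -/
def CherryModOp (G G' : Net) : Prop := ReduceOp G G' ∨ CutOp G G' ∨ SimpOp G G'

/-- A single weak cherry modification operation: reduce, cut, simp or trim. -/
def WeakCherryModOp (G G' : Net) : Prop := CherryModOp G G' ∨ TrimOp G G'

/-- The network consisting of a single vertex (and no arcs). -/
def IsSingleV (G : Net) : Prop := ∃ v, G.verts = {v} ∧ G.arcs = ∅

/-- `G` admits a complete cherry modification sequence, i.e. `G` is an orchard. -/
def IsOrchardN (G : Net) : Prop :=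
  ∃ G', Relation.ReflTransGen CherryModOp G G' ∧ IsSingleV G'

/-- `G` admits a complete weak cherry modification sequence, i.e. `G` is a weak
orchard. -/
def IsWeakOrchardN (G : Net) : Prop :=
  ∃ G', Relation.ReflTransGen WeakCherryModOp G G' ∧ IsSingleV G'

/-! ### The traceback through the simplification sequence -/

/-- Traceback step in case `α = 0`: replace the leaf indexing the first component
of `m''` by a cherry on two new leaves. -/
def CherryExpandOp (R'' R' : LNet) : Prop :=
  ∃ y1 y2 b1 b2,
    y1 ∉ R''.net.verts ∧ y2 ∉ R''.net.verts ∧ y1 ≠ y2 ∧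
    b1 ∉ R''.net.arcs ∧ b2 ∉ R''.net.arcs ∧ b1 ≠ b2 ∧
    R'.net.verts = R''.net.verts ∪ {y1, y2} ∧
    R'.net.arcs = R''.net.arcs ∪ {b1, b2} ∧
    (∀ a ∈ R''.net.arcs, R'.net.src a = R''.net.src a ∧ R'.net.tgt a = R''.net.tgt a) ∧
    R'.net.src b1 = R''.leaf 0 ∧ R'.net.tgt b1 = y1 ∧
    R'.net.src b2 = R''.leaf 0 ∧ R'.net.tgt b2 = y2 ∧
    R'.leaf 0 = y1 ∧ R'.leaf 1 = y2 ∧ (∀ i, 1 ≤ i → R'.leaf (i + 1) = R''.leaf i)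

/-- Traceback step in case `α > m₂'`: subdivide the incoming arcs of the leaves
indexing the first and second components of `m''` by new vertices `u` and `v` and
add the arc `(v,u)`. -/
def AddArcOp (R'' R' : LNet) : Prop :=
  ∃ u v a0 a1 b0 b1 c,
    u ∉ R''.net.verts ∧ v ∉ R''.net.verts ∧ u ≠ v ∧
    a0 ∈ R''.net.arcs ∧ R''.net.tgt a0 = R''.leaf 0 ∧
    a1 ∈ R''.net.arcs ∧ R''.net.tgt a1 = R''.leaf 1 ∧ a0 ≠ a1 ∧
    b0 ∉ R''.net.arcs ∧ b1 ∉ R''.net.arcs ∧ c ∉ R''.net.arcs ∧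
    b0 ≠ b1 ∧ b0 ≠ c ∧ b1 ≠ c ∧
    R'.net.verts = R''.net.verts ∪ {u, v} ∧
    R'.net.arcs = R''.net.arcs ∪ {b0, b1, c} ∧
    (∀ a ∈ R''.net.arcs, a ≠ a0 → a ≠ a1 →
        R'.net.src a = R''.net.src a ∧ R'.net.tgt a = R''.net.tgt a) ∧
    R'.net.src a0 = R''.net.src a0 ∧ R'.net.tgt a0 = u ∧
    R'.net.src a1 = R''.net.src a1 ∧ R'.net.tgt a1 = v ∧
    R'.net.src b0 = u ∧ R'.net.tgt b0 = R''.leaf 0 ∧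
    R'.net.src b1 = v ∧ R'.net.tgt b1 = R''.leaf 1 ∧
    R'.net.src c = v ∧ R'.net.tgt c = u ∧
    (∀ i, R'.leaf i = R''.leaf i)

/-- Traceback step in case `0 < α ≤ m₂'`, where the inserted component `α` sits at
(0-based) position `j` of `m''`: subdivide the incoming arc of the leaf indexing
`α` by a vertex `v`, replace the leaf indexing the first component of `m''` by a
cherry, subdivide the incoming arc of one of the two new cherry leaves by a vertex
`u`, add the arc `(v,u)` and delete the leaf indexing `α` together with its
incoming arc, suppressing the resulting degree-two vertex. -/
def InsertBackOp (j : ℕ) (R'' R' : LNet) : Prop :=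
  ∃ u y1 y2 c1 c2 c3 az,
    u ∉ R''.net.verts ∧ y1 ∉ R''.net.verts ∧ y2 ∉ R''.net.verts ∧
    u ≠ y1 ∧ u ≠ y2 ∧ y1 ≠ y2 ∧
    c1 ∉ R''.net.arcs ∧ c2 ∉ R''.net.arcs ∧ c3 ∉ R''.net.arcs ∧
    c1 ≠ c2 ∧ c1 ≠ c3 ∧ c2 ≠ c3 ∧
    az ∈ R''.net.arcs ∧ R''.net.tgt az = R''.leaf j ∧
    R'.net.verts = (R''.net.verts.erase (R''.leaf j)) ∪ {u, y1, y2} ∧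
    R'.net.arcs = R''.net.arcs ∪ {c1, c2, c3} ∧
    (∀ a ∈ R''.net.arcs, a ≠ az →
        R'.net.src a = R''.net.src a ∧ R'.net.tgt a = R''.net.tgt a) ∧
    R'.net.src az = R''.net.src az ∧ R'.net.tgt az = u ∧
    R'.net.src c1 = R''.leaf 0 ∧ R'.net.tgt c1 = u ∧
    R'.net.src c2 = u ∧ R'.net.tgt c2 = y1 ∧
    R'.net.src c3 = R''.leaf 0 ∧ R'.net.tgt c3 = y2 ∧
    R'.leaf 0 = y1 ∧ R'.leaf 1 = y2 ∧
    (∀ i, 1 ≤ i → i < j → R'.leaf (i + 1) = R''.leaf i) ∧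
    (∀ i, j < i → R'.leaf i = R''.leaf i)

/-- One step of the traceback: `R'` is a realization of the non-simple profile `m'`
obtained from the realization `R''` of `simpStep m'` by the surgery dictated by the
case (`α = 0`, `α > m₂'` or `0 < α ≤ m₂'`) that produced `simpStep m'` from `m'`. -/
def TraceStep (m' : List ℕ) (R'' R' : LNet) : Prop :=
  2 ≤ m'.length ∧ ¬ IsSimpleP m' ∧
  ((m'.headI = m'.tail.headI ∧ CherryExpandOp R'' R') ∨
   (m'.tail.headI < m'.headI - m'.tail.headI ∧ AddArcOp R'' R') ∨
   (0 < m'.headI - m'.tail.headI ∧ m'.headI - m'.tail.headI ≤ m'.tail.headI ∧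
     InsertBackOp
       ((m'.tail.takeWhile fun y => decide (m'.headI - m'.tail.headI ≤ y)).length)
       R'' R'))

/-- `TracebackFrom core m N`: `N` is a network `N(m)` obtainable by the traceback
through the simplification sequence of `m`, initialized with the core network
`core`. -/
inductive TracebackFrom (core : LNet) : List ℕ → LNet → Prop
  | base (m : List ℕ) : IsSimpleP m → TracebackFrom core m core
  | step (m' : List ℕ) (R'' R' : LNet) :
      TracebackFrom core (simpStep m') R'' → TraceStep m' R'' R' →
      TracebackFrom core m' R'

/-! ### Tree-based and tree-child networks -/

def subIn (G : Net) (A : Finset ℕ) (v : ℕ) : ℕ := (A.filter fun a => G.tgt a = v).card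
def subOut (G : Net) (A : Finset ℕ) (v : ℕ) : ℕ := (A.filter fun a => G.src a = v).card

/-- `G` is tree-based: some subset `A` of its arcs forms a spanning subdivision of a
rooted phylogenetic tree (with one extra incoming arc added to its root) whose
leaves are exactly the leaves of `G`; all remaining arcs of `G` join subdivision
vertices, and every subdivision vertex has total degree 3 in `G`. -/
def IsTreeBased (G : Net) : Prop :=
  ∃ A : Finset ℕ, A ⊆ G.arcs ∧
    (∃! r, r ∈ G.verts ∧ subIn G A r = 0) ∧
    (∀ r ∈ G.verts, subIn G A r = 0 → subOut G A r = 1) ∧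
    (∀ v ∈ G.verts,
        (subIn G A v = 0 ∧ subOut G A v = 1) ∨ (subIn G A v = 1 ∧ subOut G A v = 0) ∨
        (subIn G A v = 1 ∧ subOut G A v = 1) ∨ (subIn G A v = 1 ∧ subOut G A v = 2)) ∧
    (∀ v ∈ G.verts, subIn G A v = 1 → subOut G A v = 0 → IsLeafN G v) ∧
    (∀ v, IsLeafN G v → subIn G A v = 1 ∧ subOut G A v = 0) ∧
    (∀ a ∈ G.arcs, a ∉ A →
        subIn G A (G.src a) = 1 ∧ subOut G A (G.src a) = 1 ∧
        subIn G A (G.tgt a) = 1 ∧ subOut G A (G.tgt a) = 1) ∧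
    (∀ v ∈ G.verts, subIn G A v = 1 → subOut G A v = 1 → inDeg G v + outDeg G v = 3)

/-- `G` is tree-child (reticulation vertices contained in beads being ignored):
every vertex has a directed path to a leaf on which every vertex except possibly
the first one is either not a reticulation vertex or is contained in a bead. -/
def IsTreeChild (G : Net) : Prop :=
  ∀ v ∈ G.verts, ∃ (l : List ℕ) (w : ℕ), IsWalk G l v w ∧ IsLeafN G w ∧
    ∀ a ∈ l, IsReticN G (G.tgt a) → InBead G (G.tgt a)

/-! ### Multiple-labelled networks and the split operation -/

/-- A multiple-labelled network: a network together with a labelling map assigning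
to each leaf vertex the (0-based) position of the profile component it is labelled
with; distinct leaves may carry the same label. -/
structure MLNet where
  net : Net
  lab : ℕ → ℕ

/-- A multiple-labelled tree: a multiple-labelled network without reticulation
vertices. -/
def IsMLTree (R : MLNet) : Prop := ∀ v, ¬ IsReticN R.net v

/-- The multiple-labelled network `R` realizes the ploidy profile `m`: for every
position `i` of `m`, the total number of directed paths from the root to leaves
labelled `i` equals the `i`-th component of `m`. -/
def MLRealizes (R : MLNet) (m : List ℕ) : Prop :=
  IsPhylo R.net ∧
  (∀ v, IsLeafN R.net v → R.lab v < m.length) ∧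
  (∀ i < m.length, ∀ r, IsRootN R.net r →
      (∑ v ∈ R.net.verts.filter (fun v => IsLeafN R.net v ∧ R.lab v = i),
          nPaths R.net r v) = m.getD i 0)

/-- The arcs of the subgraph induced by the vertices below `c`. -/
def arcsBelow (G : Net) (c : ℕ) : Set ℕ :=
  {b | b ∈ G.arcs ∧ BelowV G c (G.src b) ∧ BelowV G c (G.tgt b)}

/-- `a` is a cut-arc of `G`: removing it disconnects its end vertices in the
underlying undirected graph. -/
def IsCutArc (G : Net) (a : ℕ) : Prop :=
  a ∈ G.arcs ∧
    ¬ Relation.ReflTransGen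
        (fun x y => ∃ b ∈ G.arcs, b ≠ a ∧
          ((G.src b = x ∧ G.tgt b = y) ∨ (G.src b = y ∧ G.tgt b = x)))
        (G.src a) (G.tgt a)

/-- The split operation: `R'` is obtained from `R` by deleting a reticulation
vertex `h` (with parents `p₁, p₂` and child `c`, where `(h,c)` is a cut-arc)
together with its three incident arcs, making a disjoint copy (via `φ` on vertices
and `ψ` on arcs) of the subgraph induced by the vertices below `c`, and attaching
one copy of `c` to `p₁` by an arc `(p₁,c)` and the other to `p₂` by an arc
`(p₂,c)`. -/
def SplitRel (R R' : MLNet) : Prop :=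
  ∃ (h p1 p2 c a0 a1 a2 : ℕ) (φ ψ : ℕ → ℕ),
    IsReticN R.net h ∧
    ArcFT R.net a0 h c ∧ IsCutArc R.net a0 ∧
    ArcFT R.net a1 p1 h ∧ ArcFT R.net a2 p2 h ∧
    a1 ≠ a2 ∧ a0 ≠ a1 ∧ a0 ≠ a2 ∧
    Set.InjOn φ {w | BelowV R.net c w} ∧
    (∀ w, BelowV R.net c w → φ w ∉ R.net.verts) ∧
    Set.InjOn ψ (arcsBelow R.net c) ∧
    (∀ b ∈ arcsBelow R.net c, ψ b ∉ R.net.arcs) ∧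
    (↑R'.net.verts : Set ℕ) =
      ((↑R.net.verts : Set ℕ) \ {h}) ∪ (φ '' {w | BelowV R.net c w}) ∧
    (↑R'.net.arcs : Set ℕ) =
      ((↑R.net.arcs : Set ℕ) \ {a0}) ∪ (ψ '' arcsBelow R.net c) ∧
    (∀ b ∈ R.net.arcs, b ≠ a0 → b ≠ a1 → b ≠ a2 →
        R'.net.src b = R.net.src b ∧ R'.net.tgt b = R.net.tgt b) ∧
    R'.net.src a1 = p1 ∧ R'.net.tgt a1 = c ∧
    R'.net.src a2 = p2 ∧ R'.net.tgt a2 = φ c ∧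
    (∀ b ∈ arcsBelow R.net c,
        R'.net.src (ψ b) = φ (R.net.src b) ∧ R'.net.tgt (ψ b) = φ (R.net.tgt b)) ∧
    (∀ v ∈ R.net.verts, v ≠ h → R'.lab v = R.lab v) ∧
    (∀ w, BelowV R.net c w → R'.lab (φ w) = R.lab w)

/-- Adjacency in ploidy profile space `𝒫(m)` (relative to an edit distance `D` on
multiple-labelled trees): both endpoints realize `m` and either one is obtained
from the other by a single split operation, or both are multiple-labelled trees at
`D`-distance 1. -/
def PEdge (m : List ℕ) (D : MLNet → MLNet → ℕ) (A B : MLNet) : Prop :=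
  MLRealizes A m ∧ MLRealizes B m ∧
    (SplitRel A B ∨ SplitRel B A ∨ (IsMLTree A ∧ IsMLTree B ∧ D A B = 1))

/-! ### Auxiliary material for Statement 17 -/

instance instDecIsWalk (G : Net) : ∀ (l : List ℕ) (u v : ℕ), Decidable (IsWalk G l u v)
  | [], u, v => decidable_of_iff (u = v ∧ u ∈ G.verts) Iff.rfl
  | a :: l, u, v =>
      haveI := instDecIsWalk G l (G.tgt a) v
      decidable_of_iff (a ∈ G.arcs ∧ G.src a = u ∧ IsWalk G l (G.tgt a) v) Iff.rfl

instance (G : Net) (v : ℕ) : Decidable (IsRootN G v) :=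
  decidable_of_iff (v ∈ G.verts ∧ inDeg G v = 0) Iff.rfl

instance (G : Net) (v : ℕ) : Decidable (IsReticN G v) :=
  decidable_of_iff (v ∈ G.verts ∧ inDeg G v = 2 ∧ outDeg G v = 1) Iff.rfl

instance (G : Net) (v : ℕ) : Decidable (IsTreeVert G v) :=
  decidable_of_iff (v ∈ G.verts ∧ inDeg G v = 1 ∧ outDeg G v = 2) Iff.rfl

instance (G : Net) (a u v : ℕ) : Decidable (ArcFT G a u v) :=
  decidable_of_iff (a ∈ G.arcs ∧ G.src a = u ∧ G.tgt a = v) Iff.rfl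

lemma append_singleton_injective (e : ℕ) :
    Function.Injective (fun l : List ℕ => l ++ [e]) := fun x y h => by
  simpa using h

lemma isWalk_append_arc {G : Net} (hG : IsPhylo G) {e : ℕ} (he : e ∈ G.arcs) :
    ∀ (l : List ℕ) (u : ℕ), IsWalk G l u (G.src e) → IsWalk G (l ++ [e]) u (G.tgt e)
  | [], u, h => by
      obtain ⟨rfl, _⟩ := h
      exact ⟨he, rfl, rfl, hG.tgt_mem e he⟩
  | a :: l, u, h => by
      obtain ⟨ha, hs, hw⟩ := h
      exact ⟨ha, hs, isWalk_append_arc hG he l _ hw⟩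

lemma isWalk_decompose {G : Net} (hG : IsPhylo G) :
    ∀ (l : List ℕ) (u w : ℕ), IsWalk G l u w → l ≠ [] →
      ∃ l' e, l = l' ++ [e] ∧ e ∈ G.arcs ∧ G.tgt e = w ∧ IsWalk G l' u (G.src e)
  | [], u, w, _, hne => absurd rfl hne
  | a :: l, u, w, h, _ => by
      obtain ⟨ha, hs, hw⟩ := h
      cases l with
      | nil =>
          obtain ⟨h1, _⟩ := hw
          exact ⟨[], a, by simp, ha, h1, hs.symm, hs ▸ hG.src_mem a ha⟩
      | cons b l' =>
          obtain ⟨m, e, hme, hmem, htgt, hwalk⟩ :=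
            isWalk_decompose hG (b :: l') (G.tgt a) w hw (by simp)
          exact ⟨a :: m, e, by rw [hme]; rfl, hmem, htgt, ha, hs, hwalk⟩

/-- Walks into a vertex with a unique in-arc. -/
lemma walks_eq_image {G : Net} (hG : IsPhylo G) {r p w e : ℕ}
    (he : ArcFT G e p w) (huniq : inDeg G w = 1) (hrw : r ≠ w) :
    {l : List ℕ | IsWalk G l r w} = (fun l => l ++ [e]) '' {l | IsWalk G l r p} := by
  ext l
  constructor
  · intro hl
    have hne : l ≠ [] := by rintro rfl; exact hrw hl.1
    obtain ⟨l', f, rfl, hf, hft, hwalk⟩ := isWalk_decompose hG l r w hl hne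
    have hfe : f = e := by
      have h1 : f ∈ G.arcs.filter (fun a => G.tgt a = w) := Finset.mem_filter.2 ⟨hf, hft⟩
      have h2 : e ∈ G.arcs.filter (fun a => G.tgt a = w) :=
        Finset.mem_filter.2 ⟨he.1, he.2.2⟩
      exact Finset.card_le_one.1 (le_of_eq huniq) _ h1 _ h2
    subst hfe
    exact ⟨l', by rwa [he.2.1] at hwalk, rfl⟩
  · rintro ⟨l', hl', rfl⟩
    have := isWalk_append_arc hG he.1 l' r (by rwa [he.2.1])
    rwa [he.2.2] at this

/-- Walks into a vertex with exactly two in-arcs from the same vertex. -/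
lemma walks_eq_union {G : Net} (hG : IsPhylo G) {r u w e1 e2 : ℕ}
    (he1 : ArcFT G e1 u w) (he2 : ArcFT G e2 u w) (hne12 : e1 ≠ e2)
    (hdeg : inDeg G w = 2) (hrw : r ≠ w) :
    {l : List ℕ | IsWalk G l r w}
      = (fun l => l ++ [e1]) '' {l | IsWalk G l r u}
        ∪ (fun l => l ++ [e2]) '' {l | IsWalk G l r u} := by
  have hfilt : G.arcs.filter (fun a => G.tgt a = w) = {e1, e2} := by
    refine (Finset.eq_of_subset_of_card_le ?_ ?_).symm
    · intro x hx
      rcases Finset.mem_insert.1 hx with rfl | hx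
      · exact Finset.mem_filter.2 ⟨he1.1, he1.2.2⟩
      · rw [Finset.mem_singleton.1 hx]
        exact Finset.mem_filter.2 ⟨he2.1, he2.2.2⟩
    · have : ({e1, e2} : Finset ℕ).card = 2 := by
        rw [Finset.card_insert_of_notMem (by simpa using hne12), Finset.card_singleton]
      rw [this]
      exact le_of_eq hdeg
  ext l
  constructor
  · intro hl
    have hne : l ≠ [] := by rintro rfl; exact hrw hl.1
    obtain ⟨l', f, rfl, hf, hft, hwalk⟩ := isWalk_decompose hG l r w hl hne
    have : f ∈ ({e1, e2} : Finset ℕ) := hfilt ▸ Finset.mem_filter.2 ⟨hf, hft⟩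
    rcases Finset.mem_insert.1 this with rfl | hf2
    · exact Or.inl ⟨l', by rwa [he1.2.1] at hwalk, rfl⟩
    · rw [Finset.mem_singleton.1 hf2] at hwalk ⊢
      exact Or.inr ⟨l', by rwa [he2.2.1] at hwalk, rfl⟩
  · rintro (⟨l', hl', rfl⟩ | ⟨l', hl', rfl⟩)
    · have := isWalk_append_arc hG he1.1 l' r (by rwa [he1.2.1])
      rwa [he1.2.2] at this
    · have := isWalk_append_arc hG he2.1 l' r (by rwa [he2.2.1])
      rwa [he2.2.2] at this

/-- No network with a sole leaf and an odd number of root-to-leaf paths admits a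
`simp` operation. -/
lemma no_simp_of_three {G : Net} {r v : ℕ} (hG : IsPhylo G) (hr : IsRootN G r)
    (hv : IsLeafN G v) (hsole : ∀ w, IsLeafN G w → w = v)
    (h3 : nPaths G r v = 3) (G' : Net) : ¬ SimpOp G G' := by
  rintro ⟨a, h, u, e1, e2, e3, ha, -, hret, he1, he2, hne12, he3, -⟩
  have hav : a = v := hsole a ha
  subst hav
  have hrv : r ≠ a := by
    intro heq
    have h0 : inDeg G r = 0 := hr.2
    rw [heq, hv.2.1] at h0
    exact one_ne_zero h0
  have hrh : r ≠ h := by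
    intro heq
    have h0 : inDeg G r = 0 := hr.2
    rw [heq, hret.2.1] at h0
    exact two_ne_zero h0
  have hWv : {l : List ℕ | IsWalk G l r a}
      = (fun l => l ++ [e3]) '' {l | IsWalk G l r h} :=
    walks_eq_image hG he3 hv.2.1 hrv
  have hWh : {l : List ℕ | IsWalk G l r h}
      = (fun l => l ++ [e1]) '' {l | IsWalk G l r u}
        ∪ (fun l => l ++ [e2]) '' {l | IsWalk G l r u} :=
    walks_eq_union hG he1 he2 hne12 hret.2.1 hrh
  have hn3 : Set.ncard {l : List ℕ | IsWalk G l r a} = 3 := h3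
  have hfinv : Set.Finite {l : List ℕ | IsWalk G l r a} := by
    by_contra hf
    rw [Set.Infinite.ncard hf] at hn3
    exact three_ne_zero hn3.symm
  have hfinh : Set.Finite {l : List ℕ | IsWalk G l r h} := by
    refine Set.Finite.of_finite_image ?_ ((append_singleton_injective e3).injOn)
    rw [← hWv]; exact hfinv
  have hfinu : Set.Finite {l : List ℕ | IsWalk G l r u} := by
    refine Set.Finite.of_finite_image ?_ ((append_singleton_injective e1).injOn)
    refine Set.Finite.subset hfinh ?_
    rw [hWh]; exact Set.subset_union_left
  have hdisj : Disjoint ((fun l : List ℕ => l ++ [e1]) '' {l | IsWalk G l r u})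
      ((fun l : List ℕ => l ++ [e2]) '' {l | IsWalk G l r u}) := by
    rw [Set.disjoint_left]
    rintro x ⟨l1, -, rfl⟩ ⟨l2, -, heq⟩
    have h2 := (List.append_inj' heq rfl).2
    exact hne12 (by injection h2 with h2a; exact h2a.symm) 
  have hcount : (3 : ℕ) = Set.ncard {l : List ℕ | IsWalk G l r u}
      + Set.ncard {l : List ℕ | IsWalk G l r u} := by
    rw [← hn3, hWv, Set.ncard_image_of_injective _ (append_singleton_injective e3), hWh,
      Set.ncard_union_eq hdisj (hfinu.image _) (hfinu.image _),
      Set.ncard_image_of_injective _ (append_singleton_injective e1),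
      Set.ncard_image_of_injective _ (append_singleton_injective e2)]
  omega

/-! The concrete weak-orchard realization of `(3)`:
root `0`, tree vertex `1`, bead reticulation `2`, reticulation `3`, leaf `4`. -/

def G1 : Net where
  verts := Finset.range 5
  arcs := Finset.range 6
  src := fun a => [0, 0, 1, 1, 2, 3].getD a 0
  tgt := fun a => [1, 3, 2, 2, 3, 4].getD a 0

/-- `G1` after trimming the arc `(0,3)`: a bead on `0, 3` with pendant leaf `4`. -/
def G2 : Net where
  verts := {0, 3, 4}
  arcs := {0, 1, 5}
  src := fun a => if a = 5 then 3 else 0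
  tgt := fun a => if a = 5 then 4 else 3

/-- The single-vertex network on the leaf `4`. -/
def G3 : Net where
  verts := {4}
  arcs := ∅
  src := fun _ => 0
  tgt := fun _ => 0

lemma G1_walk_le : ∀ (l : List ℕ) (u w : ℕ), IsWalk G1 l u w → u ≤ w
  | [], _, _, h => le_of_eq h.1
  | a :: l, u, w, h => by
      obtain ⟨ha, hs, hw⟩ := h
      have h1 : G1.src a < G1.tgt a := by
        have : a < 6 := Finset.mem_range.1 ha
        interval_cases a <;> decide
      have h2 := G1_walk_le l _ _ hw
      omega

lemma G1_walks4 : ∀ l, IsWalk G1 l 4 4 → l = []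
  | [], _ => rfl
  | a :: l, h => by
      obtain ⟨ha, hs, -⟩ := h
      have : a < 6 := Finset.mem_range.1 ha
      interval_cases a <;> exact absurd hs (by decide)

lemma G1_walks3 : ∀ l, IsWalk G1 l 3 4 → l = [5]
  | [], h => absurd h.1 (by decide)
  | a :: l, h => by
      obtain ⟨ha, hs, hw⟩ := h
      have : a < 6 := Finset.mem_range.1 ha
      interval_cases a <;> first
        | exact absurd hs (by decide)
        | rw [G1_walks4 l hw]

lemma G1_walks2 : ∀ l, IsWalk G1 l 2 4 → l = [4, 5]
  | [], h => absurd h.1 (by decide)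
  | a :: l, h => by
      obtain ⟨ha, hs, hw⟩ := h
      have : a < 6 := Finset.mem_range.1 ha
      interval_cases a <;> first
        | exact absurd hs (by decide)
        | rw [G1_walks3 l hw]

lemma G1_walks1 : ∀ l, IsWalk G1 l 1 4 → l = [2, 4, 5] ∨ l = [3, 4, 5]
  | [], h => absurd h.1 (by decide)
  | a :: l, h => by
      obtain ⟨ha, hs, hw⟩ := h
      have : a < 6 := Finset.mem_range.1 ha
      interval_cases a <;> first
        | exact absurd hs (by decide)
        | (left; rw [G1_walks2 l hw]; done)
        | (right; rw [G1_walks2 l hw]; done)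

lemma G1_walks0 : ∀ l, IsWalk G1 l 0 4 →
    l = [0, 2, 4, 5] ∨ l = [0, 3, 4, 5] ∨ l = [1, 5]
  | [], h => absurd h.1 (by decide)
  | a :: l, h => by
      obtain ⟨ha, hs, hw⟩ := h
      have : a < 6 := Finset.mem_range.1 ha
      interval_cases a
      · rcases G1_walks1 l hw with rfl | rfl
        · exact Or.inl rfl
        · exact Or.inr (Or.inl rfl)
      · exact Or.inr (Or.inr (by rw [G1_walks3 l hw]))
      all_goals exact absurd hs (by decide)

lemma G1_phylo : IsPhylo G1 := by
  refine ⟨by decide, by decide, by decide, ?_, ?_, ?_, by decide⟩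
  · rintro v (- | ⟨a, l⟩) hne hw
    · exact hne rfl
    · obtain ⟨ha, hs, hw'⟩ := hw
      have h1 : G1.src a < G1.tgt a := by
        have : a < 6 := Finset.mem_range.1 ha
        interval_cases a <;> decide
      have h2 := G1_walk_le l _ _ hw'
      omega
  · refine ⟨0, by decide, ?_⟩
    rintro y ⟨hm, h0⟩
    have : y < 5 := Finset.mem_range.1 hm
    interval_cases y <;> first | rfl | exact absurd h0 (by decide)
  · rintro rr ⟨hm, h0⟩
    have : rr < 5 := Finset.mem_range.1 hm
    interval_cases rr <;> first | decide | exact absurd h0 (by decide)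

lemma G1_sole_leaf : ∀ w, IsLeafN G1 w → w = 4 := by
  intro w hw
  have : w < 5 := Finset.mem_range.1 hw.1
  interval_cases w <;> first | rfl | exact absurd hw (by decide)

lemma G1_nPaths : nPaths G1 0 4 = 3 := by
  have hset : {l : List ℕ | IsWalk G1 l 0 4}
      = {[0, 2, 4, 5], [0, 3, 4, 5], [1, 5]} := by
    ext l
    simp only [Set.mem_setOf_eq, Set.mem_insert_iff, Set.mem_singleton_iff]
    constructor
    · exact G1_walks0 l
    · rintro (rfl | rfl | rfl) <;> decide
  rw [nPaths, hset]
  exact Set.ncard_eq_three.2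
    ⟨[0, 2, 4, 5], [0, 3, 4, 5], [1, 5], by decide, by decide, by decide, rfl⟩

lemma G2_sole_leaf : ∀ w, IsLeafN G2 w → w = 4 := by
  intro w hw
  have hm := hw.1
  have : w = 0 ∨ w = 3 ∨ w = 4 := by
    simpa [G2] using hm
  rcases this with rfl | rfl | rfl
  · exact absurd hw (by decide)
  · exact absurd hw (by decide)
  · rfl

lemma trim_G1_G2 : TrimOp G1 G2 := by
  refine ⟨4, 3, 5, by decide, G1_sole_leaf, by decide, by decide,
    Or.inr ⟨1, 0, 2, 0, 2, 3, 1, 4, by decide, by decide, by decide, by decide,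
      by decide, by decide, by decide, by decide, by decide, by decide, by decide,
      by decide, by decide⟩⟩

lemma simp_G2_G3 : SimpOp G2 G3 := by
  refine ⟨4, 3, 0, 0, 1, 5, by decide, G2_sole_leaf, by decide, by decide, by decide,
    by decide, by decide, Or.inl ⟨by decide, by decide, by decide⟩⟩

lemma G1_weak_orchard : IsWeakOrchardN G1 := by
  refine ⟨G3, ?_, 4, rfl, rfl⟩
  exact Relation.ReflTransGen.head (Or.inr trim_G1_G2)
    (Relation.ReflTransGen.single (Or.inl (Or.inr (Or.inr simp_G2_G3))))

/-- The ploidy profile `(3)` on a single-element set `{x₁}` is a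
weak orchard but not an orchard: some phylogenetic network with a single leaf and
exactly 3 root-to-leaf paths admits a complete weak cherry modification sequence,
but no such network admits a complete cherry modification sequence. -/
theorem profile_three_weak_orchard_not_orchard :
    (∃ (G : Net) (r v : ℕ), IsPhylo G ∧ IsRootN G r ∧ IsLeafN G v ∧
      (∀ w, IsLeafN G w → w = v) ∧ nPaths G r v = 3 ∧ IsWeakOrchardN G) ∧
    (∀ (G : Net) (r v : ℕ), IsPhylo G → IsRootN G r → IsLeafN G v →
      (∀ w, IsLeafN G w → w = v) → nPaths G r v = 3 → ¬ IsOrchardN G) := by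
  constructor
  · exact ⟨G1, 0, 4, G1_phylo, by decide, by decide, G1_sole_leaf, G1_nPaths,
      G1_weak_orchard⟩
  · rintro G r v hG hr hv hsole h3 ⟨G', hsteps, hsingle⟩
    have hrv : r ≠ v := by
      intro heq
      have h0 : inDeg G r = 0 := hr.2
      rw [heq, hv.2.1] at h0
      exact one_ne_zero h0
    rcases Relation.ReflTransGen.cases_head hsteps with rfl | ⟨c, hstep, -⟩
    · obtain ⟨w, hverts, -⟩ := hsingle
      have h1 : r = w := by have := hr.1; rw [hverts] at this; simpa using this
      have h2 : v = w := by have := hv.1; rw [hverts] at this; simpa using this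
      exact hrv (h1.trans h2.symm)
    · rcases hstep with hred | hcut | hsimp
      · obtain ⟨a, b, -, -, -, hab, hla, hlb, -⟩ := hred
        exact hab ((hsole a hla).trans (hsole b hlb).symm)
      · obtain ⟨a, b, -, -, -, -, -, -, -, -, -, hab, hla, hlb, -⟩ := hcut
        exact hab ((hsole a hla).trans (hsole b hlb).symm)
      · exact no_simp_of_three hG hr hv hsole h3 c hsimp

end Ploidy
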